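/- Let c ∈ W^{2,∞}(ℝ³) with c = 1 outside a bounded Lipschitz domain Ω and 0 < c₋ ≤ c ≤ c₊, and suppose the resolvent estimate ‖û‖_{L²(Ω)} ≤ C k^{-1}‖φ‖_{L²(Ω)} holds for outgoing solutions of −Δû − (k²/c²)û = φ with supp φ ⊂ Ω, for all k ≥ k₀. Let f ∈ H⁴(ℝ³) with supp f ⊂ Ω and let û(·,k) be the outgoing solution with right-hand side φ = (ik/c²)f. Then the remainder R(x,k) := û(x,k) + i f(x)/k satisfies ‖R(·,k)‖_{L²(Ω)} ≤ C k^{-3} ‖f‖_{H⁴(Ω)} for all k ≥ k₀, with C depending only on Ω, c₋, c₊, ‖c‖_{W^{2,∞}} and the resolvent constant. -/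

import Mathlib

open Complex MeasureTheory Real

noncomputable section

abbrev E3 := EuclideanSpace ℝ (Fin 3)

/-- Partial derivative in direction i of a complex-valued function on ℝ³. -/
def pderiv3 (i : Fin 3) (g : E3 → ℂ) (x : E3) : ℂ :=
  fderiv ℝ g x (EuclideanSpace.single i 1)

/-- Laplacian of a complex-valued function on ℝ³. -/
def lap3 (g : E3 → ℂ) (x : E3) : ℂ := ∑ i, pderiv3 i (pderiv3 i g) x

/-- The L²(Ω) norm of a function. -/
def L2On (Ω : Set E3) (g : E3 → ℂ) : ℝ := (∫ x in Ω, ‖g x‖ ^ 2) ^ ((1 : ℝ) / 2)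

/-- The H⁴(Ω) norm of a function (via iterated derivatives of order ≤ 4). -/
def H4On (Ω : Set E3) (g : E3 → ℂ) : ℝ :=
  (∑ j ∈ Finset.range 5, ∫ x in Ω, ‖iteratedFDeriv ℝ j g x‖ ^ 2) ^ ((1 : ℝ) / 2)

/-! ### Auxiliary lemmas -/

lemma contDiff_pderiv3 {n : ℕ} {g : E3 → ℂ} (hg : ContDiff ℝ (n+1 : ℕ) g) (i : Fin 3) :
    ContDiff ℝ (n : ℕ) (pderiv3 i g) := by
  have h1 : ContDiff ℝ (n : ℕ) (fderiv ℝ g) := hg.fderiv_right (by exact_mod_cast le_refl _)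
  have : pderiv3 i g = fun x =>
      (ContinuousLinearMap.apply ℝ ℂ (EuclideanSpace.single i (1:ℝ))) (fderiv ℝ g x) := rfl
  rw [this]
  exact (ContinuousLinearMap.apply ℝ ℂ (EuclideanSpace.single i (1:ℝ))).contDiff.comp h1

lemma contDiff_lap3 {n : ℕ} {g : E3 → ℂ} (hg : ContDiff ℝ (n+2 : ℕ) g) :
    ContDiff ℝ (n : ℕ) (lap3 g) := by
  have : lap3 g = fun x => ∑ i : Fin 3, pderiv3 i (pderiv3 i g) x := rfl
  rw [this]
  exact ContDiff.sum fun i _ => contDiff_pderiv3 (contDiff_pderiv3 hg i) i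

lemma norm_iFD_pderiv3_le {n : ℕ} {g : E3 → ℂ} (hg : ContDiff ℝ (n+1 : ℕ) g) (i : Fin 3)
    (x : E3) : ‖iteratedFDeriv ℝ n (pderiv3 i g) x‖ ≤ ‖iteratedFDeriv ℝ (n+1) g x‖ := by
  have h1 : ContDiff ℝ (n : ℕ) (fderiv ℝ g) := hg.fderiv_right (by exact_mod_cast le_refl _)
  have h2 := norm_iteratedFDeriv_clm_apply_const (c := EuclideanSpace.single i (1:ℝ))
    (f := fderiv ℝ g) (x := x) (n := n) h1.contDiffAt le_rfl
  have h3 : ‖EuclideanSpace.single i (1:ℝ)‖ = 1 := by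
    simp [EuclideanSpace.norm_single]
  calc ‖iteratedFDeriv ℝ n (pderiv3 i g) x‖
      = ‖iteratedFDeriv ℝ n (fun y => (fderiv ℝ g y) (EuclideanSpace.single i (1:ℝ))) x‖ := rfl
    _ ≤ ‖EuclideanSpace.single i (1:ℝ)‖ * ‖iteratedFDeriv ℝ n (fderiv ℝ g) x‖ := h2
    _ = ‖iteratedFDeriv ℝ (n+1) g x‖ := by rw [h3, one_mul, norm_iteratedFDeriv_fderiv]

lemma norm_iFD_lap3_le {n : ℕ} {g : E3 → ℂ} (hg : ContDiff ℝ (n+2 : ℕ) g) (x : E3) :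
    ‖iteratedFDeriv ℝ n (lap3 g) x‖ ≤ 3 * ‖iteratedFDeriv ℝ (n+2) g x‖ := by
  have hcd : ∀ i : Fin 3, ContDiff ℝ (n : ℕ) (pderiv3 i (pderiv3 i g)) := by
    intro i
    have h1 : ContDiff ℝ ((n+1 : ℕ) : ℕ) (pderiv3 i g) := by
      have : ContDiff ℝ ((n+1)+1 : ℕ) g := by exact_mod_cast hg
      exact contDiff_pderiv3 this i
    exact contDiff_pderiv3 h1 i
  have hsum : iteratedFDeriv ℝ n (lap3 g) x = ∑ i : Fin 3,
      iteratedFDeriv ℝ n (pderiv3 i (pderiv3 i g)) x := by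
    have h := iteratedFDeriv_sum (𝕜 := ℝ) (u := (Finset.univ : Finset (Fin 3)))
      (f := fun i => pderiv3 i (pderiv3 i g)) (i := n) (fun j _ => hcd j)
    have h' := congrFun h x
    rw [show lap3 g = fun x => ∑ j : Fin 3, pderiv3 j (pderiv3 j g) x from rfl]
    simpa [Finset.sum_apply, lap3] using h'
  rw [hsum]
  have hterm : ∀ i : Fin 3, ‖iteratedFDeriv ℝ n (pderiv3 i (pderiv3 i g)) x‖
      ≤ ‖iteratedFDeriv ℝ (n+2) g x‖ := by
    intro i
    have h1 : ContDiff ℝ ((n+1)+1 : ℕ) g := by exact_mod_cast hg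
    have hpg : ContDiff ℝ ((n+1 : ℕ)) (pderiv3 i g) := contDiff_pderiv3 h1 i
    calc ‖iteratedFDeriv ℝ n (pderiv3 i (pderiv3 i g)) x‖
        ≤ ‖iteratedFDeriv ℝ (n+1) (pderiv3 i g) x‖ := norm_iFD_pderiv3_le hpg i x
      _ ≤ ‖iteratedFDeriv ℝ ((n+1)+1) g x‖ := norm_iFD_pderiv3_le h1 i x
      _ = ‖iteratedFDeriv ℝ (n+2) g x‖ := by norm_num
  calc ‖∑ i : Fin 3, iteratedFDeriv ℝ n (pderiv3 i (pderiv3 i g)) x‖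
      ≤ ∑ i : Fin 3, ‖iteratedFDeriv ℝ n (pderiv3 i (pderiv3 i g)) x‖ := norm_sum_le _ _
    _ ≤ ∑ _i : Fin 3, ‖iteratedFDeriv ℝ (n+2) g x‖ := Finset.sum_le_sum (fun i _ => hterm i)
    _ = 3 * ‖iteratedFDeriv ℝ (n+2) g x‖ := by
        simp [Finset.sum_const, Finset.card_univ]

lemma norm_lap3_le {g : E3 → ℂ} (hg : ContDiff ℝ (2 : ℕ) g) (x : E3) :
    ‖lap3 g x‖ ≤ 3 * ‖iteratedFDeriv ℝ 2 g x‖ := by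
  have h := norm_iFD_lap3_le (n := 0) (by exact_mod_cast hg) x
  simpa [norm_iteratedFDeriv_zero] using h

lemma support_pderiv3_subset (i : Fin 3) (g : E3 → ℂ) :
    Function.support (pderiv3 i g) ⊆ tsupport g := by
  intro x hx
  have : fderiv ℝ g x ≠ 0 := by
    intro h0; apply hx; simp [pderiv3, h0]
  exact support_fderiv_subset ℝ this

lemma tsupport_pderiv3_subset (i : Fin 3) (g : E3 → ℂ) :
    tsupport (pderiv3 i g) ⊆ tsupport g :=
  closure_minimal (support_pderiv3_subset i g) (isClosed_closure)

lemma support_lap3_subset (g : E3 → ℂ) :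
    Function.support (lap3 g) ⊆ tsupport g := by
  intro x hx
  simp only [Function.mem_support, lap3] at hx
  obtain ⟨i, hi⟩ := Finset.exists_ne_zero_of_sum_ne_zero hx
  exact tsupport_pderiv3_subset i g
    (tsupport_pderiv3_subset i _ (subset_closure (Function.mem_support.2 hi.2)))

lemma norm_iFD_csq_le {c : E3 → ℝ} (hc2 : ContDiff ℝ (2:ℕ) c) {Mc : ℝ}
    (hMc : ∀ j : ℕ, j ≤ 2 → ∀ x : E3, ‖iteratedFDeriv ℝ j c x‖ ≤ Mc)
    {j : ℕ} (hj : j ≤ 2) (x : E3) :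
    ‖iteratedFDeriv ℝ j (fun x => ((c x : ℝ) : ℂ)^2) x‖ ≤ 4 * Mc^2 := by
  have hMc0 : 0 ≤ Mc := le_trans (norm_nonneg _) (hMc 0 (by norm_num) x)
  have hcc : ContDiff ℝ (2:ℕ) (fun x => c x * c x) := hc2.mul hc2
  have heq : (fun x => ((c x : ℝ) : ℂ)^2) = Complex.ofRealLI ∘ (fun x => c x * c x) := by
    funext y; show _ = (((c y * c y : ℝ)) : ℂ); push_cast; ring
  rw [heq]
  rw [Complex.ofRealLI.norm_iteratedFDeriv_comp_left hcc.contDiffAt (by exact_mod_cast hj)]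
  have h := norm_iteratedFDeriv_mul_le (𝕜 := ℝ) hc2 hc2 x (n := j) (by exact_mod_cast hj)
  refine h.trans ?_
  have hb : ∀ i ∈ Finset.range (j+1), (j.choose i : ℝ) * ‖iteratedFDeriv ℝ i c x‖ *
      ‖iteratedFDeriv ℝ (j-i) c x‖ ≤ (j.choose i : ℝ) * Mc * Mc := by
    intro i hi
    simp only [Finset.mem_range, Nat.lt_succ_iff] at hi
    have h1 := hMc i (le_trans hi hj) x
    have h2 := hMc (j-i) (le_trans (Nat.sub_le _ _) hj) x
    have hch : (0:ℝ) ≤ (j.choose i : ℝ) := by positivity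
    calc (j.choose i : ℝ) * ‖iteratedFDeriv ℝ i c x‖ * ‖iteratedFDeriv ℝ (j-i) c x‖
        ≤ (j.choose i : ℝ) * Mc * ‖iteratedFDeriv ℝ (j-i) c x‖ := by
          apply mul_le_mul_of_nonneg_right _ (norm_nonneg _)
          exact mul_le_mul_of_nonneg_left h1 hch
      _ ≤ (j.choose i : ℝ) * Mc * Mc := by
          apply mul_le_mul_of_nonneg_left h2 (by positivity)
  refine (Finset.sum_le_sum hb).trans ?_
  have heval : ∑ i ∈ Finset.range (j+1), (j.choose i : ℝ) * Mc * Mc = (2:ℝ)^j * Mc^2 := by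
    rw [← Finset.sum_mul, ← Finset.sum_mul]
    have : ∑ i ∈ Finset.range (j+1), (j.choose i : ℝ) = (2:ℝ)^j := by
      exact_mod_cast congrArg (Nat.cast : ℕ → ℝ) (Nat.sum_range_choose j)
    rw [this]; ring
  rw [heval]
  have : (2:ℝ)^j ≤ 4 := by
    calc (2:ℝ)^j ≤ 2^2 := by
          apply pow_le_pow_right₀ (by norm_num) hj
      _ = 4 := by norm_num
  nlinarith [sq_nonneg Mc]

lemma pderiv3_comb {g₁ g₂ : E3 → ℂ} (h₁ : Differentiable ℝ g₁) (h₂ : Differentiable ℝ g₂)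
    (a b : ℂ) (i : Fin 3) :
    pderiv3 i (fun y => a * g₁ y + b * g₂ y) = fun y => a * pderiv3 i g₁ y + b * pderiv3 i g₂ y := by
  funext y
  have d1 : DifferentiableAt ℝ (fun y => a * g₁ y) y := (h₁ y).const_mul a
  have d2 : DifferentiableAt ℝ (fun y => b * g₂ y) y := (h₂ y).const_mul b
  have e : fderiv ℝ (fun y => a * g₁ y + b * g₂ y) y
      = a • fderiv ℝ g₁ y + b • fderiv ℝ g₂ y := by
    rw [fderiv_fun_add d1 d2, fderiv_const_mul (h₁ y) a, fderiv_const_mul (h₂ y) b]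
  simp only [pderiv3, e, ContinuousLinearMap.add_apply, ContinuousLinearMap.smul_apply,
    smul_eq_mul]

lemma lap3_comb {g₁ g₂ : E3 → ℂ} (h₁ : ContDiff ℝ (2:ℕ) g₁) (h₂ : ContDiff ℝ (2:ℕ) g₂)
    (a b : ℂ) (x : E3) :
    lap3 (fun y => a * g₁ y + b * g₂ y) x = a * lap3 g₁ x + b * lap3 g₂ x := by
  have hd1 : Differentiable ℝ g₁ := h₁.differentiable (by norm_num)
  have hd2 : Differentiable ℝ g₂ := h₂.differentiable (by norm_num)
  have hp1 : ∀ i : Fin 3, Differentiable ℝ (pderiv3 i g₁) := fun i =>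
    (contDiff_pderiv3 (n := 1) (by exact_mod_cast h₁) i).differentiable (by norm_num)
  have hp2 : ∀ i : Fin 3, Differentiable ℝ (pderiv3 i g₂) := fun i =>
    (contDiff_pderiv3 (n := 1) (by exact_mod_cast h₂) i).differentiable (by norm_num)
  simp only [lap3]
  rw [Finset.mul_sum, Finset.mul_sum, ← Finset.sum_add_distrib]
  apply Finset.sum_congr rfl
  intro i _
  rw [pderiv3_comb hd1 hd2 a b i, pderiv3_comb (hp1 i) (hp2 i) a b i]

lemma sqrt_add_le' {x y : ℝ} (hx : 0 ≤ x) (hy : 0 ≤ y) :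
    Real.sqrt (x + y) ≤ Real.sqrt x + Real.sqrt y := by
  nlinarith [Real.sq_sqrt hx, Real.sq_sqrt hy, Real.sqrt_nonneg x, Real.sqrt_nonneg y,
    Real.sq_sqrt (add_nonneg hx hy), Real.sqrt_nonneg (x+y),
    sq_nonneg (Real.sqrt x + Real.sqrt y - Real.sqrt (x+y))]

lemma L2On_eq_sqrt (Ω : Set E3) (g : E3 → ℂ) :
    L2On Ω g = Real.sqrt (∫ x in Ω, ‖g x‖ ^ 2) := by
  rw [L2On, Real.sqrt_eq_rpow]

lemma L2On_const_mul (Ω : Set E3) (g : E3 → ℂ) (a : ℂ) :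
    L2On Ω (fun x => a * g x) = ‖a‖ * L2On Ω g := by
  rw [L2On_eq_sqrt, L2On_eq_sqrt]
  have hpt : ∀ x : E3, ‖a * g x‖^2 = ‖a‖^2 * ‖g x‖^2 := by
    intro x; rw [norm_mul]; ring
  simp_rw [hpt]
  rw [MeasureTheory.integral_const_mul, Real.sqrt_mul (by positivity),
    Real.sqrt_sq (norm_nonneg a)]

lemma L2On_le_of_pointwise {Ω : Set E3} {g : E3 → ℂ} {K : ℝ} {G : E3 → ℝ} (hK : 0 ≤ K)
    (hpt : ∀ x, ‖g x‖ ≤ K * G x) (hG : ∀ x, 0 ≤ G x)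
    (hGi : IntegrableOn (fun x => (G x)^2) Ω) :
    L2On Ω g ≤ K * Real.sqrt (∫ x in Ω, (G x)^2) := by
  rw [L2On_eq_sqrt]
  have h1 : (∫ x in Ω, ‖g x‖^2) ≤ ∫ x in Ω, K^2 * (G x)^2 := by
    apply MeasureTheory.integral_mono_of_nonneg
    · exact Filter.Eventually.of_forall fun x => by positivity
    · exact hGi.const_mul _
    · exact Filter.Eventually.of_forall fun x => by
        have := hpt x
        calc ‖g x‖^2 ≤ (K * G x)^2 := by
              apply sq_le_sq' _ this
              exact le_trans (by nlinarith [hG x]) (norm_nonneg (g x))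
          _ = K^2 * (G x)^2 := by ring
  calc Real.sqrt (∫ x in Ω, ‖g x‖^2) ≤ Real.sqrt (∫ x in Ω, K^2 * (G x)^2) :=
        Real.sqrt_le_sqrt h1
    _ = K * Real.sqrt (∫ x in Ω, (G x)^2) := by
        rw [MeasureTheory.integral_const_mul, Real.sqrt_mul (by positivity), Real.sqrt_sq hK]

lemma L2On_add_le {Ω : Set E3} {p q : E3 → ℂ}
    (hp : IntegrableOn (fun x => ‖p x‖^2) Ω) (hq : IntegrableOn (fun x => ‖q x‖^2) Ω) :
    L2On Ω (fun x => p x + q x) ≤ 2 * (L2On Ω p + L2On Ω q) := by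
  rw [L2On_eq_sqrt, L2On_eq_sqrt, L2On_eq_sqrt]
  have h1 : (∫ x in Ω, ‖p x + q x‖^2) ≤ ∫ x in Ω, (2*‖p x‖^2 + 2*‖q x‖^2) := by
    apply MeasureTheory.integral_mono_of_nonneg
    · exact Filter.Eventually.of_forall fun x => by positivity
    · exact ((hp.const_mul 2).add (hq.const_mul 2))
    · exact Filter.Eventually.of_forall fun x => by
        have hnn : (0:ℝ) ≤ ‖p x + q x‖ := norm_nonneg _
        have h2 : ‖p x + q x‖^2 ≤ (‖p x‖ + ‖q x‖)^2 :=
          pow_le_pow_left₀ hnn (norm_add_le (p x) (q x)) 2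
        have h3 : (‖p x‖ + ‖q x‖)^2 ≤ 2*‖p x‖^2 + 2*‖q x‖^2 := by
          nlinarith [sq_nonneg (‖p x‖ - ‖q x‖)]
        simpa using h2.trans h3
  have hIp : 0 ≤ ∫ x in Ω, ‖p x‖^2 := MeasureTheory.integral_nonneg fun x => by positivity
  have hIq : 0 ≤ ∫ x in Ω, ‖q x‖^2 := MeasureTheory.integral_nonneg fun x => by positivity
  calc Real.sqrt (∫ x in Ω, ‖p x + q x‖^2)
      ≤ Real.sqrt ((∫ x in Ω, 2*‖p x‖^2) + ∫ x in Ω, 2*‖q x‖^2) := by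
        apply Real.sqrt_le_sqrt
        rw [← MeasureTheory.integral_add (hp.const_mul 2) (hq.const_mul 2)]
        exact h1
    _ ≤ Real.sqrt (∫ x in Ω, 2*‖p x‖^2) + Real.sqrt (∫ x in Ω, 2*‖q x‖^2) := by
        apply sqrt_add_le' <;>
          exact MeasureTheory.integral_nonneg fun x => by positivity
    _ ≤ 2 * (Real.sqrt (∫ x in Ω, ‖p x‖^2) + Real.sqrt (∫ x in Ω, ‖q x‖^2)) := by
        simp_rw [MeasureTheory.integral_const_mul]
        rw [Real.sqrt_mul (by norm_num), Real.sqrt_mul (by norm_num)]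
        have h2 : Real.sqrt 2 ≤ 2 := by
          nlinarith [Real.sq_sqrt (by norm_num : (0:ℝ) ≤ 2), Real.sqrt_nonneg 2]
        nlinarith [Real.sqrt_nonneg (∫ x in Ω, ‖p x‖^2), Real.sqrt_nonneg (∫ x in Ω, ‖q x‖^2),
          Real.sqrt_nonneg (2:ℝ)]
set_option maxHeartbeats 1000000 in
/-- under the resolvent estimate ‖û‖_{L²(Ω)} ≤ C₀ k⁻¹ ‖φ‖_{L²(Ω)} for
outgoing solutions of −Δû − (k²/c²)û = φ with supp φ ⊆ Ω, the outgoing solution û(·,k)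
with source (ik/c²)f satisfies ‖û(·,k) + i f/k‖_{L²(Ω)} ≤ C k⁻³ ‖f‖_{H⁴(Ω)}
for all k ≥ k₀. -/
theorem stmt18
    (Ω : Set E3) (hΩo : IsOpen Ω) (hΩb : Bornology.IsBounded Ω)
    (c : E3 → ℝ) (hc2 : ContDiff ℝ 2 c)
    (Mc : ℝ) (hMc : ∀ j : ℕ, j ≤ 2 → ∀ x : E3, ‖iteratedFDeriv ℝ j c x‖ ≤ Mc)
    (cmin cmax : ℝ) (hcmin : 0 < cmin) (hcbd : ∀ x : E3, cmin ≤ c x ∧ c x ≤ cmax)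
    (hc1 : ∀ x ∉ Ω, c x = 1)
    (Outgoing : ℝ → (E3 → ℂ) → Prop)
    (hout_sub : ∀ (k : ℝ) (v w : E3 → ℂ), Outgoing k v → HasCompactSupport w →
      Outgoing k (fun x => v x - w x))
    (C₀ k₀ : ℝ) (hC₀ : 0 < C₀) (hk₀ : 1 ≤ k₀)
    (hres : ∀ k ≥ k₀, ∀ v ϕ : E3 → ℂ, Outgoing k v →
      Function.support ϕ ⊆ Ω →
      (∀ x : E3, -(lap3 v x) - (((k ^ 2 / (c x) ^ 2 : ℝ)) : ℂ) * v x = ϕ x) →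
      L2On Ω v ≤ C₀ * k⁻¹ * L2On Ω ϕ)
    (f : E3 → ℂ) (hf4 : ContDiff ℝ 4 f) (hfsupp : tsupport f ⊆ Ω)
    (uhat : ℝ → E3 → ℂ) (hureg : ∀ k : ℝ, ContDiff ℝ 2 (uhat k))
    (huout : ∀ k : ℝ, Outgoing k (uhat k))
    (hupde : ∀ (k : ℝ) (x : E3),
      -(lap3 (uhat k) x) - (((k ^ 2 / (c x) ^ 2 : ℝ)) : ℂ) * uhat k x
        = (Complex.I * (k : ℂ) / ((c x : ℝ) : ℂ) ^ 2) * f x) :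
    ∃ C > 0, ∀ k ≥ k₀,
      L2On Ω (fun x => uhat k x + Complex.I * f x / (k : ℂ))
        ≤ C / k ^ 3 * H4On Ω f := by
  -- regularity facts
  have hf4' : ContDiff ℝ (4:ℕ) f := by exact_mod_cast hf4
  have hf2' : ContDiff ℝ (2:ℕ) f := hf4'.of_le (by exact_mod_cast (by norm_num : (2:ℕ) ≤ 4))
  have hc2' : ContDiff ℝ (2:ℕ) c := by exact_mod_cast hc2
  have hMc0 : 0 ≤ Mc := le_trans (norm_nonneg _) (hMc 0 (by norm_num) 0)
  set csq : E3 → ℂ := fun x => ((c x : ℝ) : ℂ)^2 with hcsq_def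
  have hcsq2 : ContDiff ℝ (2:ℕ) csq := by
    have hbase : ContDiff ℝ (2:ℕ) (fun x : E3 => ((c x:ℝ):ℂ)) :=
      Complex.ofRealCLM.contDiff.comp hc2'
    exact hbase.pow 2
  have hlapf2 : ContDiff ℝ (2:ℕ) (lap3 f) := by
    apply contDiff_lap3 (n := 2)
    exact_mod_cast hf4'
  set h : E3 → ℂ := fun x => csq x * lap3 f x with hh_def
  have hh2 : ContDiff ℝ (2:ℕ) h := hcsq2.mul hlapf2
  -- pointwise bounds
  set G : E3 → ℝ := fun x => ∑ j ∈ Finset.range 5, ‖iteratedFDeriv ℝ j f x‖ with hG_def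
  have hGnn : ∀ x, 0 ≤ G x := fun x =>
    Finset.sum_nonneg fun j _ => norm_nonneg _
  have hfG : ∀ m : ℕ, m ≤ 4 → ∀ x, ‖iteratedFDeriv ℝ m f x‖ ≤ G x := by
    intro m hm x
    show ‖iteratedFDeriv ℝ m f x‖ ≤ ∑ j ∈ Finset.range 5, ‖iteratedFDeriv ℝ j f x‖
    exact Finset.single_le_sum (f := fun j => ‖iteratedFDeriv ℝ j f x‖)
      (fun j _ => norm_nonneg _) (Finset.mem_range.2 (by omega))
  have hlapf_j : ∀ j : ℕ, j ≤ 2 → ∀ x, ‖iteratedFDeriv ℝ j (lap3 f) x‖ ≤ 3 * G x := by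
    intro j hj x
    have h1 : ContDiff ℝ (j+2 : ℕ) f := hf4'.of_le (by exact_mod_cast (by omega : j+2 ≤ 4))
    calc ‖iteratedFDeriv ℝ j (lap3 f) x‖ ≤ 3 * ‖iteratedFDeriv ℝ (j+2) f x‖ :=
          norm_iFD_lap3_le h1 x
      _ ≤ 3 * G x := by
          have := hfG (j+2) (by omega) x
          linarith
  have hcsqb : ∀ j : ℕ, j ≤ 2 → ∀ x, ‖iteratedFDeriv ℝ j csq x‖ ≤ 4*Mc^2 := by
    intro j hj x
    exact norm_iFD_csq_le hc2' hMc hj x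
  set K1 : ℝ := 144 * Mc^2 + 144 with hK1_def
  have hK1pos : 0 < K1 := by positivity
  have hh_iFD2 : ∀ x, ‖iteratedFDeriv ℝ 2 h x‖ ≤ 48 * Mc^2 * G x := by
    intro x
    have hmul := norm_iteratedFDeriv_mul_le (𝕜 := ℝ) hcsq2 hlapf2 x (n := 2)
      (by exact_mod_cast le_refl _)
    refine le_trans hmul ?_
    have hb : ∀ i ∈ Finset.range 3, (Nat.choose 2 i : ℝ) * ‖iteratedFDeriv ℝ i csq x‖ *
        ‖iteratedFDeriv ℝ (2-i) (lap3 f) x‖ ≤ (Nat.choose 2 i : ℝ) * (4*Mc^2) * (3 * G x) := by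
      intro i hi
      simp only [Finset.mem_range, Nat.lt_succ_iff] at hi
      gcongr
      · exact hcsqb i hi x
      · exact hlapf_j (2-i) (by omega) x
    refine le_trans (Finset.sum_le_sum hb) ?_
    rw [Finset.sum_range_succ, Finset.sum_range_succ, Finset.sum_range_one]
    norm_num [Nat.choose]
    nlinarith [hGnn x, sq_nonneg Mc]
  have hlap3h : ∀ x, ‖lap3 h x‖ ≤ K1 * G x := by
    intro x
    calc ‖lap3 h x‖ ≤ 3 * ‖iteratedFDeriv ℝ 2 h x‖ := norm_lap3_le hh2 x
      _ ≤ 3 * (48 * Mc^2 * G x) := by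
          have := hh_iFD2 x; linarith
      _ ≤ K1 * G x := by nlinarith [hGnn x, sq_nonneg Mc]
  have hhpt : ∀ x, ‖h x‖ ≤ K1 * G x := by
    intro x
    have h0 : ‖csq x‖ ≤ 4 * Mc^2 := by
      have := hcsqb 0 (by norm_num) x
      simpa [norm_iteratedFDeriv_zero] using this
    have h1 : ‖lap3 f x‖ ≤ 3 * G x := by
      calc ‖lap3 f x‖ ≤ 3 * ‖iteratedFDeriv ℝ 2 f x‖ := norm_lap3_le hf2' x
        _ ≤ 3 * G x := by have := hfG 2 (by norm_num) x; linarith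
    calc ‖h x‖ = ‖csq x‖ * ‖lap3 f x‖ := norm_mul _ _
      _ ≤ (4*Mc^2) * (3 * G x) := by
          apply mul_le_mul h0 h1 (norm_nonneg _) (by positivity)
      _ ≤ K1 * G x := by nlinarith [hGnn x, sq_nonneg Mc]
  -- supports
  have hKf : IsCompact (tsupport f) :=
    Metric.isCompact_of_isClosed_isBounded (isClosed_tsupport f) (hΩb.subset hfsupp)
  have hsupp_h : Function.support h ⊆ tsupport f := by
    intro x hx
    have hl : lap3 f x ≠ 0 := by
      intro h0
      apply hx
      show h x = 0
      rw [hh_def]; simp [h0]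
    exact support_lap3_subset f (Function.mem_support.2 hl)
  have htsupp_h : tsupport h ⊆ tsupport f := closure_minimal hsupp_h (isClosed_tsupport f)
  have hsupp_lap3h : Function.support (lap3 h) ⊆ Ω := fun x hx =>
    hfsupp (htsupp_h (support_lap3_subset h hx))
  -- integrability
  have hΩc : IsCompact (closure Ω) :=
    Metric.isCompact_of_isClosed_isBounded isClosed_closure hΩb.closure
  have hInt : ∀ F : E3 → ℝ, Continuous F → IntegrableOn F Ω volume := fun F hF =>
    (hF.continuousOn.integrableOn_compact hΩc).mono_set subset_closure
  have hGcont : Continuous G := by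
    rw [hG_def]
    apply continuous_finset_sum
    intro j hj
    have hj4 : (j:ℕ) ≤ 4 := by
      simp only [Finset.mem_range] at hj; omega
    exact (hf4'.continuous_iteratedFDeriv (by exact_mod_cast hj4)).norm
  have hhcont : Continuous h := hh2.continuous
  have hfcont : Continuous f := hf4'.continuous
  -- H4 comparison
  set S : ℝ := ∑ j ∈ Finset.range 5, ∫ x in Ω, ‖iteratedFDeriv ℝ j f x‖^2 with hS_def
  have hIj : ∀ j ∈ Finset.range 5,
      IntegrableOn (fun x => ‖iteratedFDeriv ℝ j f x‖^2) Ω volume := by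
    intro j hj
    have hj4 : (j:ℕ) ≤ 4 := by simp only [Finset.mem_range] at hj; omega
    exact hInt _ (((hf4'.continuous_iteratedFDeriv (by exact_mod_cast hj4)).norm).pow 2)
  have hH4_eq : H4On Ω f = Real.sqrt S := by
    rw [H4On, Real.sqrt_eq_rpow, hS_def]
  have hH4nn : 0 ≤ H4On Ω f := by rw [hH4_eq]; exact Real.sqrt_nonneg _
  have hQle : Real.sqrt (∫ x in Ω, (G x)^2) ≤ Real.sqrt 5 * H4On Ω f := by
    have hptw : ∀ x, (G x)^2 ≤ 5 * ∑ j ∈ Finset.range 5, ‖iteratedFDeriv ℝ j f x‖^2 := by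
      intro x
      have hcs := sq_sum_le_card_mul_sum_sq (s := Finset.range 5)
        (f := fun j => ‖iteratedFDeriv ℝ j f x‖)
      simpa [hG_def] using hcs
    have hint5 : IntegrableOn
        (fun x => 5 * ∑ j ∈ Finset.range 5, ‖iteratedFDeriv ℝ j f x‖^2) Ω volume :=
      (MeasureTheory.integrable_finset_sum _ hIj).const_mul 5
    have h1 : (∫ x in Ω, (G x)^2)
        ≤ ∫ x in Ω, 5 * ∑ j ∈ Finset.range 5, ‖iteratedFDeriv ℝ j f x‖^2 := by
      apply MeasureTheory.integral_mono_of_nonneg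
      · exact Filter.Eventually.of_forall fun x => by positivity
      · exact hint5
      · exact Filter.Eventually.of_forall fun x => hptw x
    have h2 : (∫ x in Ω, 5 * ∑ j ∈ Finset.range 5, ‖iteratedFDeriv ℝ j f x‖^2) = 5 * S := by
      rw [MeasureTheory.integral_const_mul, MeasureTheory.integral_finset_sum _ hIj, hS_def]
    calc Real.sqrt (∫ x in Ω, (G x)^2)
        ≤ Real.sqrt (5 * S) := Real.sqrt_le_sqrt (by rw [← h2]; exact h1)
      _ = Real.sqrt 5 * Real.sqrt S := Real.sqrt_mul (by norm_num) S
      _ = Real.sqrt 5 * H4On Ω f := by rw [hH4_eq]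
  -- the constant
  refine ⟨2*(C₀+1)*K1*Real.sqrt 5 + 1, by positivity, ?_⟩
  intro k hk
  have hk1 : (1:ℝ) ≤ k := le_trans hk₀ hk
  have hkpos : (0:ℝ) < k := lt_of_lt_of_le one_pos hk1
  have hkc : (k:ℂ) ≠ 0 := by exact_mod_cast hkpos.ne'
  set w : E3 → ℂ := fun y => (-Complex.I/(k:ℂ)) * f y + (Complex.I/(k:ℂ)^3) * h y with hw_def
  have hw2 : ContDiff ℝ (2:ℕ) w := (contDiff_const.mul hf2').add (contDiff_const.mul hh2)
  have hwcont : Continuous w := hw2.continuous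
  have hwcs : HasCompactSupport w := by
    have hsw : Function.support w ⊆ tsupport f := by
      intro x hx
      by_contra hxn
      have hfx : f x = 0 := image_eq_zero_of_notMem_tsupport hxn
      have hhx : h x = 0 := by
        by_contra hh0
        exact hxn (htsupp_h (subset_closure (Function.mem_support.2 hh0)))
      apply hx
      show w x = 0
      rw [hw_def]; simp [hfx, hhx]
    exact IsCompact.of_isClosed_subset hKf (isClosed_tsupport w)
      (closure_minimal hsw (isClosed_tsupport f))
  have hvout : Outgoing k (fun x => uhat k x - w x) := hout_sub k (uhat k) w (huout k) hwcs
  have hφsupp : Function.support (fun x => (Complex.I/(k:ℂ)^3) * lap3 h x) ⊆ Ω := by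
    intro x hx
    apply hsupp_lap3h
    simp only [Function.mem_support] at hx ⊢
    intro h0; apply hx; rw [h0]; ring
  have hu2 : ContDiff ℝ (2:ℕ) (uhat k) := by exact_mod_cast hureg k
  have hpde_v : ∀ x : E3,
      -(lap3 (fun x => uhat k x - w x) x) - (((k ^ 2 / (c x) ^ 2 : ℝ)) : ℂ) * (uhat k x - w x)
        = (Complex.I/(k:ℂ)^3) * lap3 h x := by
    intro x
    have e0 : (fun y => uhat k y - w y) = (fun y => (1:ℂ) * uhat k y + (-1) * w y) := by
      funext y; ring
    have e1 : lap3 (fun y => uhat k y - w y) x = lap3 (uhat k) x - lap3 w x := by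
      rw [e0, lap3_comb hu2 hw2 1 (-1) x]; ring
    have e2 : lap3 w x = (-Complex.I/(k:ℂ)) * lap3 f x + (Complex.I/(k:ℂ)^3) * lap3 h x := by
      rw [hw_def]
      exact lap3_comb hf2' hh2 _ _ x
    have hup := hupde k x
    have hcx : (c x : ℂ) ≠ 0 := by
      have h1 : (0:ℝ) < c x := lt_of_lt_of_le hcmin (hcbd x).1
      exact_mod_cast h1.ne'
    have hK : (((k^2/(c x)^2 : ℝ)) : ℂ) = (k:ℂ)^2 / ((c x:ℂ))^2 := by push_cast; ring
    have hhx : h x = ((c x:ℂ))^2 * lap3 f x := rfl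
    have hwx : w x = (-Complex.I/(k:ℂ)) * f x + (Complex.I/(k:ℂ)^3) * h x := by rw [hw_def]
    rw [e1, e2, hK, hwx, hhx]
    rw [hK] at hup
    have hlapu : lap3 (uhat k) x = -((k:ℂ)^2/((c x:ℂ))^2 * uhat k x)
        - (Complex.I*(k:ℂ)/((c x:ℂ))^2) * f x := by linear_combination -hup
    rw [hlapu]
    have hc6 : ((c x:ℂ))^6 * ((c x:ℂ))⁻¹^6 = 1 := by
      rw [← mul_pow, mul_inv_cancel₀ hcx, one_pow]
    have hk8 : ((k:ℂ))^8 * ((k:ℂ))⁻¹^8 = 1 := by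
      rw [← mul_pow, mul_inv_cancel₀ hkc, one_pow]
    field_simp
    ring
  have hres_app := hres k hk (fun x => uhat k x - w x) (fun x => (Complex.I/(k:ℂ)^3) * lap3 h x)
    hvout hφsupp hpde_v
  -- norms
  have hbnorm : ‖(Complex.I/(k:ℂ)^3)‖ = 1/k^3 := by
    rw [norm_div, Complex.norm_I, norm_pow, Complex.norm_real, Real.norm_eq_abs,
      abs_of_pos hkpos]
  have hQnn : 0 ≤ Real.sqrt (∫ x in Ω, (G x)^2) := Real.sqrt_nonneg _
  have hG2i : IntegrableOn (fun x => (G x)^2) Ω volume := hInt _ (hGcont.pow 2)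
  have hlap3h_L2 : L2On Ω (lap3 h) ≤ K1 * Real.sqrt (∫ x in Ω, (G x)^2) :=
    L2On_le_of_pointwise hK1pos.le hlap3h hGnn hG2i
  have hh_L2 : L2On Ω h ≤ K1 * Real.sqrt (∫ x in Ω, (G x)^2) :=
    L2On_le_of_pointwise hK1pos.le hhpt hGnn hG2i
  have hφ_eq : L2On Ω (fun x => (Complex.I/(k:ℂ)^3) * lap3 h x)
      = (1/k^3) * L2On Ω (lap3 h) := by
    rw [L2On_const_mul, hbnorm]
  have hbh_eq : L2On Ω (fun x => (Complex.I/(k:ℂ)^3) * h x) = (1/k^3) * L2On Ω h := by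
    rw [L2On_const_mul, hbnorm]
  -- split
  have hsplit : L2On Ω (fun x => uhat k x + Complex.I * f x / (k:ℂ))
      ≤ 2 * (L2On Ω (fun x => uhat k x - w x)
        + L2On Ω (fun x => (Complex.I/(k:ℂ)^3) * h x)) := by
    have e : (fun x => uhat k x + Complex.I * f x / (k:ℂ))
        = fun x => (uhat k x - w x) + (Complex.I/(k:ℂ)^3) * h x := by
      funext x
      rw [hw_def]
      ring
    rw [e]
    exact L2On_add_le
      (hInt _ ((((hureg k).continuous.sub hwcont).norm).pow 2))
      (hInt _ (((continuous_const.mul hhcont).norm).pow 2))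
  -- numeric assembly
  set Q : ℝ := Real.sqrt (∫ x in Ω, (G x)^2) with hQ_def
  have hk3pos : (0:ℝ) < k^3 := by positivity
  have hkinv : k⁻¹ ≤ 1 := by
    rw [inv_le_one_iff₀]; right; exact hk1
  have hA : L2On Ω (fun x => uhat k x - w x) ≤ C₀ * ((1/k^3) * (K1 * Q)) := by
    calc L2On Ω (fun x => uhat k x - w x)
        ≤ C₀ * k⁻¹ * L2On Ω (fun x => (Complex.I/(k:ℂ)^3) * lap3 h x) := hres_app
      _ = C₀ * k⁻¹ * ((1/k^3) * L2On Ω (lap3 h)) := by rw [hφ_eq]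
      _ ≤ C₀ * k⁻¹ * ((1/k^3) * (K1 * Q)) := by
          apply mul_le_mul_of_nonneg_left _ (by positivity)
          apply mul_le_mul_of_nonneg_left hlap3h_L2 (by positivity)
      _ ≤ C₀ * 1 * ((1/k^3) * (K1 * Q)) := by
          apply mul_le_mul_of_nonneg_right _ (by positivity)
          exact mul_le_mul_of_nonneg_left hkinv hC₀.le
      _ = C₀ * ((1/k^3) * (K1 * Q)) := by ring
  have hB : L2On Ω (fun x => (Complex.I/(k:ℂ)^3) * h x) ≤ (1/k^3) * (K1 * Q) := by
    rw [hbh_eq]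
    apply mul_le_mul_of_nonneg_left hh_L2 (by positivity)
  calc L2On Ω (fun x => uhat k x + Complex.I * f x / (k:ℂ))
      ≤ 2 * (L2On Ω (fun x => uhat k x - w x)
        + L2On Ω (fun x => (Complex.I/(k:ℂ)^3) * h x)) := hsplit
    _ ≤ 2 * (C₀ * ((1/k^3) * (K1 * Q)) + (1/k^3) * (K1 * Q)) := by
        apply mul_le_mul_of_nonneg_left (add_le_add hA hB) (by norm_num)
    _ = 2 * (C₀ + 1) * K1 * Q * (1/k^3) := by ring
    _ ≤ 2 * (C₀ + 1) * K1 * (Real.sqrt 5 * H4On Ω f) * (1/k^3) := by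
        apply mul_le_mul_of_nonneg_right _ (by positivity)
        apply mul_le_mul_of_nonneg_left _ (by positivity)
        rw [hQ_def]; exact hQle
    _ = (2*(C₀+1)*K1*Real.sqrt 5) / k^3 * H4On Ω f := by ring
    _ ≤ (2*(C₀+1)*K1*Real.sqrt 5 + 1) / k^3 * H4On Ω f := by
        apply mul_le_mul_of_nonneg_right _ hH4nn
        gcongr
        linarith

end
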